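/- There exists a constant c > 0 such that for every positive integer n, τ(n) ≥ c·n^(4/3); that is, the peeling process on the n × n integer grid requires Ω(n^(4/3)) iterations. -/

import Mathlib

open Set

/-- Remove from `P` the extreme points (vertices) of its convex hull. -/
noncomputable def peel (P : Set (ℝ × ℝ)) : Set (ℝ × ℝ) :=
  P \ (convexHull ℝ P).extremePoints ℝ

/-- Number of peeling iterations until the set is empty. -/
noncomputable def tau (Q : Set (ℝ × ℝ)) : ℕ :=
  sInf {k : ℕ | peel^[k] Q = ∅}

/-- The `n × n` integer grid `{1,…,n}²`, viewed in `ℝ²`. -/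
def grid (n : ℕ) : Set (ℝ × ℝ) :=
  {p | ∃ a b : ℕ, 1 ≤ a ∧ a ≤ n ∧ 1 ≤ b ∧ b ≤ n ∧ p = ((a : ℝ), (b : ℝ))}

lemma count_lemma (n : ℕ) (V : Finset (ℤ × ℤ))
    (hx : ∀ v ∈ V, 1 ≤ v.1) (hy : ∀ v ∈ V, v.2 ≤ -1)
    (hsx : ∑ v ∈ V, v.1 ≤ 2 * n) (hsy : ∑ v ∈ V, (-v.2) ≤ 2 * n) :
    (V.card : ℤ) ^ 3 ≤ 432 * (n : ℤ) ^ 2 := by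
  set m := V.card with hm
  rcases Nat.eq_zero_or_pos m with h0 | hmpos
  · rw [h0]; push_cast; positivity
  have hn1 : 1 ≤ n := by
    by_contra h
    have : n = 0 := by omega
    subst this
    obtain ⟨v, hv⟩ := Finset.card_pos.mp hmpos
    have h1 : (1 : ℤ) ≤ ∑ v ∈ V, v.1 := by
      calc (1:ℤ) ≤ v.1 := hx v hv
      _ ≤ ∑ v ∈ V, v.1 := Finset.single_le_sum (fun w hw => (hx w hw).trans' (by norm_num)) hv
    omega
  set t := m / 2 with ht
  set r := Nat.sqrt t with hr
  set W := V.filter (fun v => v.1 ≤ (r:ℤ) ∧ -v.2 ≤ (r:ℤ)) with hW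
  have hWcard : W.card ≤ r * r := by
    have hsub : W ⊆ (Finset.Icc (1:ℤ) r) ×ˢ (Finset.Icc (-(r:ℤ)) (-1)) := by
      intro v hv
      rw [hW, Finset.mem_filter] at hv
      obtain ⟨hvV, h1, h2⟩ := hv
      rw [Finset.mem_product, Finset.mem_Icc, Finset.mem_Icc]
      exact ⟨⟨hx v hvV, h1⟩, by omega, hy v hvV⟩
    calc W.card ≤ _ := Finset.card_le_card hsub
    _ = (Finset.Icc (1:ℤ) r).card * (Finset.Icc (-(r:ℤ)) (-1)).card := Finset.card_product _ _
    _ ≤ r * r := by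
        have h1 : (Finset.Icc (1:ℤ) r).card = r := by
          rw [Int.card_Icc]; omega
        have h2 : (Finset.Icc (-(r:ℤ)) (-1)).card = r := by
          rw [Int.card_Icc]; omega
        rw [h1, h2]
  have hr2t : r * r ≤ t := by have := Nat.sqrt_le' t; nlinarith [this]
  have htr : t < (r + 1) * (r + 1) := by have := Nat.lt_succ_sqrt' t; nlinarith [this]
  have hVW : W ⊆ V := Finset.filter_subset _ _
  have hcard_sdiff : (V \ W).card = m - W.card := by rw [Finset.card_sdiff_of_subset hVW]
  have hkey : ∀ v ∈ V \ W, (r : ℤ) + 1 ≤ v.1 - v.2 := by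
    intro v hv
    rw [Finset.mem_sdiff, hW, Finset.mem_filter] at hv
    obtain ⟨hvV, hnv⟩ := hv
    have h1 := hx v hvV
    have h2 := hy v hvV
    have : ¬(v.1 ≤ (r:ℤ) ∧ -v.2 ≤ (r:ℤ)) := fun h => hnv ⟨hvV, h⟩
    omega
  have hsum1 : ((V \ W).card : ℤ) * ((r:ℤ) + 1) ≤ ∑ v ∈ V \ W, (v.1 - v.2) := by
    have := Finset.card_nsmul_le_sum (V \ W) (fun v => v.1 - v.2) ((r:ℤ)+1) hkey
    simpa [nsmul_eq_mul] using this
  have hsum2 : ∑ v ∈ V \ W, (v.1 - v.2) ≤ ∑ v ∈ V, (v.1 - v.2) := by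
    apply Finset.sum_le_sum_of_subset_of_nonneg (Finset.sdiff_subset)
    intro v hv _
    have := hx v hv; have := hy v hv; omega
  have hsum3 : ∑ v ∈ V, (v.1 - v.2) ≤ 4 * n := by
    rw [Finset.sum_sub_distrib]
    have : ∑ v ∈ V, v.2 = -∑ v ∈ V, (-v.2) := by
      rw [← Finset.sum_neg_distrib]; ring_nf
    omega
  have hmain : (t : ℤ) * ((r:ℤ) + 1) ≤ 4 * n := by
    have h1 : (t : ℤ) ≤ ((V \ W).card : ℤ) := by
      have : t ≤ m - W.card := by omega
      exact_mod_cast hcard_sdiff ▸ Nat.cast_le.mpr this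
    calc (t:ℤ) * ((r:ℤ)+1) ≤ ((V \ W).card : ℤ) * ((r:ℤ)+1) := by
          apply mul_le_mul_of_nonneg_right h1; positivity
    _ ≤ ∑ v ∈ V \ W, (v.1 - v.2) := hsum1
    _ ≤ 4 * n := hsum2.trans hsum3
  -- now conclude in ℕ
  have hmainN : t * (r + 1) ≤ 4 * n := by exact_mod_cast hmain
  have ht3 : t ^ 3 ≤ 16 * n ^ 2 := by
    have h1 : t ^ 3 ≤ (t * (r+1)) ^ 2 := by nlinarith [htr]
    calc t ^ 3 ≤ (t * (r+1))^2 := h1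
    _ ≤ (4 * n)^2 := Nat.pow_le_pow_left hmainN 2
    _ = 16 * n ^ 2 := by ring
  have hm2t : m ≤ 2 * t + 1 := by omega
  have hfin : m ^ 3 ≤ 432 * n ^ 2 := by
    rcases Nat.eq_zero_or_pos t with ht0 | htpos
    · have : m ≤ 1 := by omega
      have : m ^ 3 ≤ 1 := by
        calc m ^ 3 ≤ 1 ^ 3 := Nat.pow_le_pow_left this 3
        _ = 1 := by norm_num
      nlinarith [hn1]
    · calc m ^ 3 ≤ (3 * t)^3 := Nat.pow_le_pow_left (by omega) 3
      _ = 27 * t ^ 3 := by ring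
      _ ≤ 27 * (16 * n ^ 2) := by omega
      _ = 432 * n ^ 2 := by ring
  exact_mod_cast hfin

lemma chain_lemma (n k : ℕ) (h : ℕ → ℤ × ℤ)
    (hb : ∀ i, i < k → |(h i).1| ≤ (n:ℤ) ∧ |(h i).2| ≤ (n:ℤ))
    (hmono : ∀ i j, i < j → j < k → (h i).1 < (h j).1 ∧ (h j).2 < (h i).2)
    (hconc : ∀ i j l, i < j → j < l → l < k →
      ((h l).2 - (h i).2) * ((h j).1 - (h i).1) < ((h j).2 - (h i).2) * ((h l).1 - (h i).1)) :
    ((k : ℤ) - 1) ^ 3 ≤ 432 * (n : ℤ) ^ 2 := by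
  rcases Nat.lt_or_ge k 1 with hk | hk
  · interval_cases k
    have : (0:ℤ) ≤ 432 * (n:ℤ)^2 := by positivity
    norm_num
    linarith
  set m := k - 1 with hmdef
  have hkm : k = m + 1 := by omega
  -- difference vectors
  set v : ℕ → ℤ × ℤ := fun i => (( (h (i+1)).1 - (h i).1), ((h (i+1)).2 - (h i).2)) with hv
  have hvx : ∀ i, i < m → 1 ≤ (v i).1 := by
    intro i hi
    have := hmono i (i+1) (by omega) (by omega)
    simp only [hv]; omega
  have hvy : ∀ i, i < m → (v i).2 ≤ -1 := by
    intro i hi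
    have := hmono i (i+1) (by omega) (by omega)
    simp only [hv]; omega
  -- slopes strictly decreasing
  have hslope : ∀ i j, i < j → j < m → ((v j).2 : ℝ) / ((v j).1 : ℝ) < ((v i).2 : ℝ) / ((v i).1 : ℝ) := by
    have step : ∀ i, i + 1 < m → ((v (i+1)).2 : ℝ) / ((v (i+1)).1 : ℝ) < ((v i).2 : ℝ) / ((v i).1 : ℝ) := by
      intro i hi
      have hc := hconc i (i+1) (i+2) (by omega) (by omega) (by omega)
      have h1 : (1:ℤ) ≤ (v i).1 := hvx i (by omega)
      have h2 : (1:ℤ) ≤ (v (i+1)).1 := hvx (i+1) hi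
      rw [div_lt_div_iff₀ (by exact_mod_cast h2 : (0:ℝ) < _) (by exact_mod_cast h1 : (0:ℝ) < _)]
      have key : (v (i+1)).2 * (v i).1 < (v i).2 * (v (i+1)).1 := by
        simp only [hv] at *
        nlinarith [hc]
      exact_mod_cast key
    intro i j hij hjm
    induction j with
    | zero => omega
    | succ j ih =>
      rcases Nat.lt_or_ge i j with h' | h'
      · exact (step j (by omega)).trans (ih h' (by omega))
      · have : i = j := by omega
        subst this
        exact step i (by omega)
  have hvinj : Set.InjOn v (Finset.range m) := by
    intro i hi j hj hij
    by_contra hne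
    rcases Nat.lt_or_ge i j with h' | h'
    · have := hslope i j h' (by simpa using hj)
      rw [hij] at this; exact lt_irrefl _ this
    · have h'' : j < i := by omega
      have := hslope j i h'' (by simpa using hi)
      rw [hij] at this; exact lt_irrefl _ this
  set V : Finset (ℤ × ℤ) := (Finset.range m).image v with hV
  have hVcard : V.card = m := by
    rw [hV, Finset.card_image_of_injOn hvinj, Finset.card_range]
  have hVsumx : ∑ w ∈ V, w.1 ≤ 2 * n := by
    rw [hV, Finset.sum_image hvinj]
    have htel : ∑ i ∈ Finset.range m, (v i).1 = (h m).1 - (h 0).1 := by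
      simp only [hv]
      exact Finset.sum_range_sub (fun i => (h i).1) m
    rw [htel]
    have b1 := hb m (by omega)
    have b2 := hb 0 (by omega)
    have := abs_le.mp b1.1
    have := abs_le.mp b2.1
    omega
  have hVsumy : ∑ w ∈ V, (-w.2) ≤ 2 * n := by
    rw [hV, Finset.sum_image hvinj]
    have htel : ∑ i ∈ Finset.range m, (-(v i).2) = (h 0).2 - (h m).2 := by
      simp only [hv, neg_sub]
      exact Finset.sum_range_sub' (fun i => (h i).2) m
    rw [htel]
    have b1 := hb m (by omega)
    have b2 := hb 0 (by omega)
    have := abs_le.mp b1.2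
    have := abs_le.mp b2.2
    omega
  have := count_lemma n V (fun w hw => by
      rw [hV, Finset.mem_image] at hw
      obtain ⟨i, hi, rfl⟩ := hw
      exact hvx i (by simpa using hi))
    (fun w hw => by
      rw [hV, Finset.mem_image] at hw
      obtain ⟨i, hi, rfl⟩ := hw
      exact hvy i (by simpa using hi))
    hVsumx hVsumy
  rw [hVcard] at this
  have : ((k:ℤ) - 1) = (m : ℤ) := by push_cast; omega
  rw [this]
  exact ‹((m:ℤ))^3 ≤ _›

lemma grid_eq (n : ℕ) : grid n =
    ↑(((Finset.Icc 1 n) ×ˢ (Finset.Icc 1 n)).image (fun p : ℕ × ℕ => ((p.1 : ℝ), (p.2 : ℝ)))) := by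
  ext p
  simp only [grid, Finset.coe_image, Finset.coe_product, Set.mem_image, Set.mem_prod,
    Finset.mem_coe, Finset.mem_Icc, Set.mem_setOf_eq]
  constructor
  · rintro ⟨a, b, h1, h2, h3, h4, rfl⟩
    exact ⟨(a, b), ⟨⟨h1, h2⟩, ⟨h3, h4⟩⟩, rfl⟩
  · rintro ⟨⟨a, b⟩, ⟨⟨h1, h2⟩, ⟨h3, h4⟩⟩, rfl⟩
    exact ⟨a, b, h1, h2, h3, h4, rfl⟩

lemma grid_finite (n : ℕ) : (grid n).Finite := by
  rw [grid_eq]; exact (Finset.finite_toSet _)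

lemma grid_ncard (n : ℕ) : (grid n).ncard = n ^ 2 := by
  rw [grid_eq, Set.ncard_coe_finset]
  rw [Finset.card_image_of_injOn]
  · simp [Nat.card_Icc, sq]
  · intro p _ q _ hpq
    have h1 : ((p.1 : ℝ)) = q.1 := congrArg Prod.fst hpq
    have h2 : ((p.2 : ℝ)) = q.2 := congrArg Prod.snd hpq
    exact Prod.ext (by exact_mod_cast h1) (by exact_mod_cast h2)

lemma peel_subset (P : Set (ℝ × ℝ)) : peel P ⊆ P := Set.diff_subset

lemma extreme_subset (P : Set (ℝ × ℝ)) : (convexHull ℝ P).extremePoints ℝ ⊆ P :=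
  extremePoints_convexHull_subset

lemma peel_empty : peel ∅ = ∅ := by simp [peel]

lemma extreme_nonempty (P : Set (ℝ × ℝ)) (hfin : P.Finite) (hne : P.Nonempty) :
    ((convexHull ℝ P).extremePoints ℝ).Nonempty := by
  apply IsCompact.extremePoints_nonempty (hfin.isCompact_convexHull ℝ)
  exact hne.mono (subset_convexHull ℝ P)

lemma peel_ncard_lt (P : Set (ℝ × ℝ)) (hfin : P.Finite) (hne : P.Nonempty) :
    (peel P).ncard < P.ncard := by
  have h1 := extreme_subset P
  have h2 := extreme_nonempty P hfin hne
  unfold peel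
  have := Set.ncard_diff_add_ncard_of_subset h1 hfin
  have hpos : 0 < ((convexHull ℝ P).extremePoints ℝ).ncard :=
    (Set.ncard_pos (hfin.subset h1)).mpr h2
  have hPpos : 0 < P.ncard := (Set.ncard_pos hfin).mpr hne
  omega

lemma peel_terminates (P : Set (ℝ × ℝ)) (hfin : P.Finite) : peel^[P.ncard] P = ∅ := by
  generalize hN : P.ncard = N
  induction N using Nat.strong_induction_on generalizing P with
  | _ N ih =>
    have hiter_empty : ∀ j, peel^[j] (∅ : Set (ℝ × ℝ)) = ∅ := by
      intro j
      induction j with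
      | zero => simp
      | succ j ihj => rw [Function.iterate_succ_apply, peel_empty]; exact ihj
    rcases Set.eq_empty_or_nonempty P with rfl | hne
    · exact hiter_empty N
    · have hlt : (peel P).ncard < N := hN ▸ peel_ncard_lt P hfin hne
      have hNpos : 0 < N := hN ▸ ((Set.ncard_pos hfin).mpr hne)
      obtain ⟨M, hM⟩ : ∃ M, N = M + 1 := ⟨N - 1, by omega⟩
      rw [hM, Function.iterate_succ_apply]
      -- peel^[M] (peel P) = ∅ : since peel^[ncard (peel P)] (peel P) = ∅ and M ≥ that
      have hbase : peel^[(peel P).ncard] (peel P) = ∅ :=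
        ih (peel P).ncard (by omega) (peel P) (hfin.subset (peel_subset P)) rfl
      have hmono : ∀ j, peel^[(peel P).ncard + j] (peel P) = ∅ := by
        intro j
        induction j with
        | zero => simpa using hbase
        | succ j ihj =>
          rw [← Nat.add_assoc, Function.iterate_succ_apply', ihj, peel_empty]
      have : M = (peel P).ncard + (M - (peel P).ncard) := by omega
      rw [this, hmono]

lemma convex_position (P : Set (ℝ × ℝ)) {e : ℝ × ℝ}
    (he : e ∈ (convexHull ℝ P).extremePoints ℝ) :
    e ∉ convexHull ℝ (((convexHull ℝ P).extremePoints ℝ) \ {e}) := by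
  intro hmem
  set E := (convexHull ℝ P).extremePoints ℝ with hE
  have hsub : convexHull ℝ (E \ {e}) ⊆ convexHull ℝ P :=
    convexHull_min (fun x hx => extremePoints_subset hx.1) (convex_convexHull ℝ P)
  have h2 : e ∈ (convexHull ℝ (E \ {e})).extremePoints ℝ :=
    inter_extremePoints_subset_extremePoints_of_subset hsub ⟨hmem, he⟩
  have h3 := extremePoints_convexHull_subset h2
  exact h3.2 rfl

lemma floor_fact {n : ℕ} {x : ℝ} (hx : ∃ a : ℕ, 1 ≤ a ∧ a ≤ n ∧ x = (a:ℝ)) (s : ℝ)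
    (hs : s = 1 ∨ s = -1) : ((⌊s * x⌋ : ℝ) = s * x ∧ |⌊s * x⌋| ≤ (n:ℤ)) := by
  obtain ⟨a, h1, h2, rfl⟩ := hx
  rcases hs with rfl | rfl
  · rw [one_mul]
    rw [Int.floor_natCast]
    refine ⟨rfl, ?_⟩
    rw [Int.abs_natCast]
    exact_mod_cast h2
  · have : (-1 : ℝ) * (a:ℝ) = ((-(a:ℤ) : ℤ) : ℝ) := by push_cast; ring
    rw [this, Int.floor_intCast]
    refine ⟨rfl, ?_⟩
    rw [abs_neg, Int.abs_natCast]
    exact_mod_cast h2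

lemma arc_cover (E : Set (ℝ × ℝ)) (hE : E.Finite) {e : ℝ × ℝ}
    (hcp : e ∉ convexHull ℝ (E \ {e})) :
    ∃ σ τ : ℝ, (σ = 1 ∨ σ = -1) ∧ (τ = 1 ∨ τ = -1) ∧
      ∀ p ∈ convexHull ℝ (E \ {e}), ¬(σ * e.1 ≤ σ * p.1 ∧ τ * e.2 ≤ τ * p.2) := by
  have hcompact : IsCompact (convexHull ℝ (E \ {e})) :=
    (hE.subset diff_subset).isCompact_convexHull ℝ
  obtain ⟨f, u, hfu, hue⟩ := geometric_hahn_banach_closed_point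
    (convex_convexHull ℝ (E \ {e})) hcompact.isClosed hcp
  set α := f (1, 0) with hα
  set β := f (0, 1) with hβ
  have hf : ∀ p : ℝ × ℝ, f p = p.1 * α + p.2 * β := by
    intro p
    have hp : p = p.1 • ((1:ℝ), (0:ℝ)) + p.2 • ((0:ℝ), (1:ℝ)) := by
      simp [Prod.ext_iff]
    conv_lhs => rw [hp]
    rw [map_add, map_smul, map_smul, smul_eq_mul, smul_eq_mul]
  refine ⟨if 0 ≤ α then 1 else -1, if 0 ≤ β then 1 else -1, ?_, ?_, ?_⟩
  · split <;> simp
  · split <;> simp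
  · intro p hp ⟨h1, h2⟩
    have hfp : f p < u := hfu p hp
    have hfe : u < f e := hue
    have hA : (p.1 - e.1) * α ≥ 0 := by
      split at h1 <;> rename_i hcase
      · nlinarith
      · push_neg at hcase; nlinarith
    have hB : (p.2 - e.2) * β ≥ 0 := by
      split at h2 <;> rename_i hcase
      · nlinarith
      · push_neg at hcase; nlinarith
    have : f p - f e ≥ 0 := by rw [hf p, hf e]; nlinarith
    linarith

lemma arc_bound (n : ℕ) (E A : Set (ℝ × ℝ)) (hE : E.Finite) (hAE : A ⊆ E)
    (hgrid : E ⊆ grid n) (σ τ : ℝ) (hσ : σ = 1 ∨ σ = -1) (hτ : τ = 1 ∨ τ = -1)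
    (harc : ∀ e ∈ A, ∀ p ∈ convexHull ℝ (E \ {e}), ¬(σ * e.1 ≤ σ * p.1 ∧ τ * e.2 ≤ τ * p.2)) :
    ((A.ncard : ℤ) - 1) ^ 3 ≤ 432 * (n : ℤ) ^ 2 := by
  have hAfin : A.Finite := hE.subset hAE
  have hσ0 : σ ≠ 0 := by rcases hσ with rfl | rfl <;> norm_num
  have hτ0 : τ ≠ 0 := by rcases hτ with rfl | rfl <;> norm_num
  have hσσ : σ * σ = 1 := by rcases hσ with rfl | rfl <;> norm_num
  have hττ : τ * τ = 1 := by rcases hτ with rfl | rfl <;> norm_num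
  -- antichain
  have hanti : ∀ e ∈ A, ∀ f ∈ A, σ * e.1 < σ * f.1 → τ * f.2 < τ * e.2 := by
    intro e he f hf hlt
    have hne : f ≠ e := by rintro rfl; exact lt_irrefl _ hlt
    have hfE : f ∈ convexHull ℝ (E \ {e}) := subset_convexHull ℝ _ ⟨hAE hf, hne⟩
    have := harc e he f hfE
    push_neg at this
    exact this hlt.le
  -- distinct x
  have hdist : ∀ e ∈ A, ∀ f ∈ A, e ≠ f → σ * e.1 ≠ σ * f.1 := by
    intro e he f hf hne heq
    have hx : e.1 = f.1 := mul_left_cancel₀ hσ0 heq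
    rcases le_total (τ * e.2) (τ * f.2) with hy | hy
    · have hfE : f ∈ convexHull ℝ (E \ {e}) :=
        subset_convexHull ℝ _ ⟨hAE hf, fun h => hne h.symm⟩
      exact harc e he f hfE ⟨le_of_eq heq, hy⟩
    · have heE : e ∈ convexHull ℝ (E \ {f}) :=
        subset_convexHull ℝ _ ⟨hAE he, hne⟩
      exact harc f hf e heE ⟨le_of_eq heq.symm, hy⟩
  -- concavity
  have hconc : ∀ a ∈ A, ∀ b ∈ A, ∀ c ∈ A, σ * a.1 < σ * b.1 → σ * b.1 < σ * c.1 →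
      σ * (b.1 - a.1) * (τ * (c.2 - a.2)) < τ * (b.2 - a.2) * (σ * (c.1 - a.1)) := by
    intro a ha b hb c hc hab hbc
    have hca1 : (0:ℝ) < σ * (c.1 - a.1) := by nlinarith
    have hba1 : (0:ℝ) < σ * (b.1 - a.1) := by nlinarith
    have hbc1 : (0:ℝ) < σ * (c.1 - b.1) := by nlinarith
    have hca0 : c.1 - a.1 ≠ 0 := by
      intro h; rw [h, mul_zero] at hca1; exact lt_irrefl _ hca1
    set t : ℝ := (b.1 - a.1) / (c.1 - a.1) with htdef
    have ht : t = (σ * (b.1 - a.1)) / (σ * (c.1 - a.1)) := by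
      rw [htdef, mul_div_mul_left _ _ hσ0]
    have ht0 : 0 < t := by rw [ht]; positivity
    have ht1 : t < 1 := by
      rw [ht, div_lt_one hca1]; nlinarith
    set p : ℝ × ℝ := (1 - t) • a + t • c with hpdef
    have hpseg : p ∈ segment ℝ a c := ⟨1 - t, t, by linarith, ht0.le, by ring, rfl⟩
    have haE : a ∈ E \ {b} := ⟨hAE ha, fun h => by
      rw [Set.mem_singleton_iff] at h; rw [h] at hab; exact lt_irrefl _ hab⟩
    have hcE : c ∈ E \ {b} := ⟨hAE hc, fun h => by
      rw [Set.mem_singleton_iff] at h; rw [h] at hbc; exact lt_irrefl _ hbc⟩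
    have hpmem : p ∈ convexHull ℝ (E \ {b}) :=
      segment_subset_convexHull haE hcE hpseg
    have hp1 : p.1 = b.1 := by
      have : p.1 = (1 - t) * a.1 + t * c.1 := rfl
      rw [this, htdef]
      field_simp
      ring
    have hp2 : p.2 = (1 - t) * a.2 + t * c.2 := rfl
    have := harc b hb p hpmem
    push_neg at this
    have hyineq : τ * p.2 < τ * b.2 := this (le_of_eq (by rw [hp1]))
    rw [hp2] at hyineq
    -- τ*((1-t)a₂ + t c₂) < τ b₂ ; multiply by σ(c₁-a₁) > 0, substitute t
    have hexp : τ * ((1 - t) * a.2 + t * c.2) = τ * a.2 + t * (τ * (c.2 - a.2)) := by ring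
    rw [hexp] at hyineq
    have hmul := mul_lt_mul_of_pos_right hyineq hca1
    have htmul : t * (σ * (c.1 - a.1)) = σ * (b.1 - a.1) := by
      rw [ht]; field_simp
    have hexpand : (τ * a.2 + t * (τ * (c.2 - a.2))) * (σ * (c.1 - a.1)) =
        τ * a.2 * (σ * (c.1 - a.1)) + τ * (c.2 - a.2) * (σ * (b.1 - a.1)) := by
      rw [← htmul]; ring
    rw [hexpand] at hmul
    nlinarith [hmul]
  -- sorting
  classical
  set k := A.ncard with hk
  set Af := hAfin.toFinset with hAf
  have hAfc : Af.card = k := by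
    rw [hAf, hk, Set.ncard_eq_toFinset_card _ hAfin]
  have hinj : Set.InjOn (fun e : ℝ × ℝ => σ * e.1) Af := by
    intro e he f hf hef
    by_contra hne
    simp only [hAf, Finset.mem_coe, Set.Finite.mem_toFinset] at he hf
    exact hdist e he f hf hne hef
  set X := Af.image (fun e : ℝ × ℝ => σ * e.1) with hX
  have hXcard : X.card = k := by
    rw [hX, Finset.card_image_of_injOn hinj, hAfc]
  set φ := X.orderIsoOfFin hXcard with hφ
  set pt := Function.invFunOn (fun e : ℝ × ℝ => σ * e.1) A with hpt
  have hptkey : ∀ x ∈ X, pt x ∈ A ∧ σ * (pt x).1 = x := by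
    intro x hx
    rw [hX, Finset.mem_image] at hx
    obtain ⟨e, he, hex⟩ := hx
    have heA : e ∈ A := by rwa [hAf, Set.Finite.mem_toFinset] at he
    have hex' : ∃ a ∈ A, σ * a.1 = x := ⟨e, heA, hex⟩
    exact ⟨Function.invFunOn_mem hex', Function.invFunOn_eq hex'⟩
  set g : ℕ → ℝ × ℝ := fun i => if hi : i < k then pt (φ ⟨i, hi⟩) else 0 with hg
  have hgA : ∀ i, i < k → g i ∈ A := by
    intro i hi
    rw [hg]; simp only [dif_pos hi]
    exact (hptkey _ (φ ⟨i, hi⟩).2).1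
  have hgx : ∀ i, (hi : i < k) → σ * (g i).1 = ((φ ⟨i, hi⟩ : ℝ)) := by
    intro i hi
    rw [hg]; simp only [dif_pos hi]
    exact (hptkey _ (φ ⟨i, hi⟩).2).2
  have hgmono : ∀ i j, i < j → j < k → σ * (g i).1 < σ * (g j).1 := by
    intro i j hij hj
    have hi : i < k := hij.trans hj
    rw [hgx i hi, hgx j hj]
    have : (⟨i, hi⟩ : Fin k) < ⟨j, hj⟩ := by exact Fin.mk_lt_mk.mpr hij
    exact_mod_cast φ.strictMono this
  set h : ℕ → ℤ × ℤ := fun i => (⌊σ * (g i).1⌋, ⌊τ * (g i).2⌋) with hh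
  have hcoord : ∀ i, i < k →
      (((h i).1 : ℝ) = σ * (g i).1 ∧ |(h i).1| ≤ (n:ℤ)) ∧
      (((h i).2 : ℝ) = τ * (g i).2 ∧ |(h i).2| ≤ (n:ℤ)) := by
    intro i hi
    obtain ⟨a, b, h1, h2, h3, h4, hab⟩ := hgrid (hAE (hgA i hi))
    have hx1 : (g i).1 = (a : ℝ) := by rw [hab]
    have hx2 : (g i).2 = (b : ℝ) := by rw [hab]
    constructor
    · have := floor_fact (n := n) (x := (g i).1) ⟨a, h1, h2, hx1⟩ σ hσ
      exact this
    · have := floor_fact (n := n) (x := (g i).2) ⟨b, h3, h4, hx2⟩ τ hτ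
      exact this
  have hbnd : ∀ i, i < k → |(h i).1| ≤ (n:ℤ) ∧ |(h i).2| ≤ (n:ℤ) := by
    intro i hi
    exact ⟨((hcoord i hi).1).2, ((hcoord i hi).2).2⟩
  have hmono' : ∀ i j, i < j → j < k → (h i).1 < (h j).1 ∧ (h j).2 < (h i).2 := by
    intro i j hij hj
    have hi : i < k := hij.trans hj
    constructor
    · have hr : ((h i).1 : ℝ) < ((h j).1 : ℝ) := by
        rw [((hcoord i hi).1).1, ((hcoord j hj).1).1]
        exact hgmono i j hij hj
      exact_mod_cast hr
    · have hr : ((h j).2 : ℝ) < ((h i).2 : ℝ) := by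
        rw [((hcoord i hi).2).1, ((hcoord j hj).2).1]
        exact hanti (g i) (hgA i hi) (g j) (hgA j hj) (hgmono i j hij hj)
      exact_mod_cast hr
  have hconc' : ∀ i j l, i < j → j < l → l < k →
      ((h l).2 - (h i).2) * ((h j).1 - (h i).1) < ((h j).2 - (h i).2) * ((h l).1 - (h i).1) := by
    intro i j l hij hjl hl
    have hj : j < k := hjl.trans hl
    have hi : i < k := hij.trans hj
    have hreal := hconc (g i) (hgA i hi) (g j) (hgA j hj) (g l) (hgA l hl)
      (hgmono i j hij hj) (hgmono j l hjl hl)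
    have hcast : ((((h l).2 - (h i).2) * ((h j).1 - (h i).1) : ℤ) : ℝ) <
        ((((h j).2 - (h i).2) * ((h l).1 - (h i).1) : ℤ) : ℝ) := by
      push_cast
      rw [((hcoord l hl).2).1, ((hcoord i hi).2).1, ((hcoord j hj).1).1,
        ((hcoord j hj).2).1, ((hcoord l hl).1).1, ((hcoord i hi).1).1]
      nlinarith [hreal]
    exact_mod_cast hcast
  exact chain_lemma n k h hbnd hmono' hconc'

lemma cube_root_bound (n : ℕ) (hn : 1 ≤ n) (k : ℕ)
    (h : ((k : ℤ) - 1) ^ 3 ≤ 432 * (n : ℤ) ^ 2) :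
    (k : ℝ) ≤ 9 * (n : ℝ) ^ ((2:ℝ)/3) := by
  have hn23 : (1:ℝ) ≤ (n:ℝ) ^ ((2:ℝ)/3) :=
    Real.one_le_rpow (by exact_mod_cast hn) (by norm_num)
  rcases Nat.eq_zero_or_pos k with rfl | hk
  · simp; linarith
  have hr : ((k:ℝ) - 1) ^ 3 ≤ 432 * (n:ℝ)^2 := by exact_mod_cast h
  have hcube : ((n:ℝ) ^ ((2:ℝ)/3)) ^ (3:ℕ) = (n:ℝ)^(2:ℕ) := by
    rw [← Real.rpow_natCast ((n:ℝ) ^ ((2:ℝ)/3)) 3, ← Real.rpow_mul (Nat.cast_nonneg n),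
      ← Real.rpow_natCast (n:ℝ) 2]
    norm_num
  have h8 : ((k:ℝ) - 1) ^ 3 ≤ (8 * (n:ℝ)^((2:ℝ)/3))^3 := by
    rw [mul_pow, hcube]
    have hnn : (0:ℝ) ≤ (n:ℝ)^2 := by positivity
    norm_num
    linarith
  have := le_of_pow_le_pow_left₀ (n := 3) (by norm_num) (by positivity) h8
  linarith

lemma extreme_bound (n : ℕ) (hn : 1 ≤ n) (P : Set (ℝ × ℝ)) (hP : P ⊆ grid n) :
    (((convexHull ℝ P).extremePoints ℝ).ncard : ℝ) ≤ 36 * (n:ℝ) ^ ((2:ℝ)/3) := by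
  classical
  set E := (convexHull ℝ P).extremePoints ℝ with hEdef
  have hEP : E ⊆ P := extremePoints_convexHull_subset
  have hEgrid : E ⊆ grid n := hEP.trans hP
  have hEfin : E.Finite := (grid_finite n).subset hEgrid
  set arc : ℝ → ℝ → Set (ℝ × ℝ) := fun σ τ =>
    {e ∈ E | ∀ p ∈ convexHull ℝ (E \ {e}), ¬(σ * e.1 ≤ σ * p.1 ∧ τ * e.2 ≤ τ * p.2)} with harc
  have hcover : E ⊆ arc 1 1 ∪ arc 1 (-1) ∪ arc (-1) 1 ∪ arc (-1) (-1) := by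
    intro e he
    obtain ⟨σ, τ, hσ, hτ, hprop⟩ := arc_cover E hEfin (convex_position P he)
    have hmem : ∀ s t : ℝ, σ = s → τ = t → e ∈ arc s t := by
      rintro s t rfl rfl
      exact ⟨he, hprop⟩
    rcases hσ with rfl | rfl <;> rcases hτ with rfl | rfl
    · exact Or.inl (Or.inl (Or.inl (hmem 1 1 rfl rfl)))
    · exact Or.inl (Or.inl (Or.inr (hmem 1 (-1) rfl rfl)))
    · exact Or.inl (Or.inr (hmem (-1) 1 rfl rfl))
    · exact Or.inr (hmem (-1) (-1) rfl rfl)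
  have harcbound : ∀ σ τ : ℝ, (σ = 1 ∨ σ = -1) → (τ = 1 ∨ τ = -1) →
      ((arc σ τ).ncard : ℝ) ≤ 9 * (n:ℝ)^((2:ℝ)/3) := by
    intro σ τ hσ hτ
    apply cube_root_bound n hn
    apply arc_bound n E (arc σ τ) hEfin (fun e he => he.1) hEgrid σ τ hσ hτ
    intro e he
    exact he.2
  have hcard : E.ncard ≤ (arc 1 1).ncard + (arc 1 (-1)).ncard + (arc (-1) 1).ncard
      + (arc (-1) (-1)).ncard := by
    calc E.ncard ≤ (arc 1 1 ∪ arc 1 (-1) ∪ arc (-1) 1 ∪ arc (-1) (-1)).ncard :=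
          Set.ncard_le_ncard hcover (by
            apply Set.Finite.union
            apply Set.Finite.union
            apply Set.Finite.union
            all_goals exact hEfin.subset (fun e he => he.1))
    _ ≤ _ := by
        calc _ ≤ (arc 1 1 ∪ arc 1 (-1) ∪ arc (-1) 1).ncard + (arc (-1) (-1)).ncard :=
              Set.ncard_union_le _ _
        _ ≤ ((arc 1 1 ∪ arc 1 (-1)).ncard + (arc (-1) 1).ncard) + (arc (-1) (-1)).ncard := by
              have := Set.ncard_union_le (arc 1 1 ∪ arc 1 (-1)) (arc (-1) 1)
              omega
        _ ≤ _ := by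
              have := Set.ncard_union_le (arc 1 1) (arc 1 (-1))
              omega
  have h1 := harcbound 1 1 (Or.inl rfl) (Or.inl rfl)
  have h2 := harcbound 1 (-1) (Or.inl rfl) (Or.inr rfl)
  have h3 := harcbound (-1) 1 (Or.inr rfl) (Or.inl rfl)
  have h4 := harcbound (-1) (-1) (Or.inr rfl) (Or.inr rfl)
  have : (E.ncard : ℝ) ≤ ((arc 1 1).ncard : ℝ) + ((arc 1 (-1)).ncard : ℝ)
      + ((arc (-1) 1).ncard : ℝ) + ((arc (-1) (-1)).ncard : ℝ) := by exact_mod_cast hcard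
  linarith

theorem tau_grid_lower_bound :
    ∃ c : ℝ, 0 < c ∧ ∀ n : ℕ, 0 < n →
      c * (n : ℝ) ^ ((4 : ℝ) / 3) ≤ (tau (grid n) : ℝ) := by
  refine ⟨1/36, by norm_num, ?_⟩
  intro n hn
  have hn1 : 1 ≤ n := hn
  set B : ℝ := 36 * (n:ℝ) ^ ((2:ℝ)/3) with hB
  have hBpos : 0 < B := by
    have : (0:ℝ) < (n:ℝ) ^ ((2:ℝ)/3) := Real.rpow_pos_of_pos (by exact_mod_cast hn) _
    positivity
  -- invariant
  have key : ∀ t : ℕ, peel^[t] (grid n) ⊆ grid n ∧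
      ((n:ℝ)^2 : ℝ) ≤ ((peel^[t] (grid n)).ncard : ℝ) + t * B := by
    intro t
    induction t with
    | zero =>
      refine ⟨subset_rfl, ?_⟩
      simp only [Function.iterate_zero_apply, Nat.cast_zero, zero_mul, add_zero]
      rw [grid_ncard]
      push_cast
      exact le_rfl
    | succ t ih =>
      obtain ⟨hsub, hcardle⟩ := ih
      set Q := peel^[t] (grid n) with hQ
      have hQfin : Q.Finite := (grid_finite n).subset hsub
      have hstep : Q.ncard ≤ (peel Q).ncard + ((convexHull ℝ Q).extremePoints ℝ).ncard := by
        have hsubE : (convexHull ℝ Q).extremePoints ℝ ⊆ Q := extremePoints_convexHull_subset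
        have h := Set.ncard_diff_add_ncard_of_subset hsubE hQfin
        rw [show peel Q = Q \ (convexHull ℝ Q).extremePoints ℝ from rfl]
        omega
      have hEbound := extreme_bound n hn1 Q hsub
      constructor
      · rw [Function.iterate_succ_apply']
        exact (Set.diff_subset).trans hsub
      · rw [Function.iterate_succ_apply']
        have hcast : (Q.ncard : ℝ) ≤ ((peel Q).ncard : ℝ) +
            (((convexHull ℝ Q).extremePoints ℝ).ncard : ℝ) := by exact_mod_cast hstep
        push_cast
        calc ((n:ℝ)^2 : ℝ) ≤ (Q.ncard : ℝ) + t * B := hcardle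
        _ ≤ ((peel Q).ncard : ℝ) + (((convexHull ℝ Q).extremePoints ℝ).ncard : ℝ) + t * B := by
            linarith
        _ ≤ ((peel Q).ncard : ℝ) + B + t * B := by linarith [hEbound]
        _ = ((peel Q).ncard : ℝ) + (t + 1) * B := by ring
  -- termination and conclusion
  have hterm : (grid n).ncard ∈ {k : ℕ | peel^[k] (grid n) = ∅} :=
    peel_terminates (grid n) (grid_finite n)
  have hne : {k : ℕ | peel^[k] (grid n) = ∅}.Nonempty := ⟨_, hterm⟩
  have htau : peel^[tau (grid n)] (grid n) = ∅ := Nat.sInf_mem hne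
  obtain ⟨-, hfinal⟩ := key (tau (grid n))
  rw [htau] at hfinal
  simp only [Set.ncard_empty, Nat.cast_zero, zero_add] at hfinal
  -- hfinal : (n:ℝ)^2 ≤ tau * B
  have hrpow : ((n:ℝ) ^ ((4:ℝ)/3)) * ((n:ℝ) ^ ((2:ℝ)/3)) = (n:ℝ)^2 := by
    rw [← Real.rpow_add (by exact_mod_cast hn : (0:ℝ) < (n:ℝ)), ← Real.rpow_natCast (n:ℝ) 2]
    norm_num
  have hkey : (1/36 * (n:ℝ)^((4:ℝ)/3)) * B = (n:ℝ)^2 := by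
    calc (1/36 * (n:ℝ)^((4:ℝ)/3)) * B = (n:ℝ)^((4:ℝ)/3) * ((n:ℝ)^((2:ℝ)/3)) := by
          rw [hB]; ring
    _ = (n:ℝ)^2 := hrpow
  have hmul : (1/36 * (n:ℝ)^((4:ℝ)/3)) * B ≤ (tau (grid n) : ℝ) * B := by
    rw [hkey]; exact hfinal
  exact le_of_mul_le_mul_right hmul hBpos
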